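/- arXiv:1611.07138 — 5 statements merged into one kernel-verified Lean document; each statement's English description precedes it below -/
import Mathlib

section
/- Let R be an m×m symmetric positive definite real matrix, h ∈ ℝ^m, A an n×m real matrix, and b ∈ ℝ^n in the range of A. Then the unique minimizer of x ↦ (1/2)xᵀRx + hᵀx subject to Ax = b is x* = R⁻¹AᵀL⁺b + (R⁻¹AᵀL⁺A − I)R⁻¹h, where L := AR⁻¹Aᵀ and L⁺ is its Moore–Penrose pseudoinverse. -/
open Matrix

private lemma zero_of_conj {m k : ℕ} {R : Matrix (Fin m) (Fin m) ℝ} (hR : R.PosDef)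
    {S : Matrix (Fin k) (Fin m) ℝ} (hS : S * R * Sᵀ = 0) : S = 0 := by
  ext i j
  by_contra hne
  have hr : S i ≠ 0 := fun h0 => hne (by simp [congrFun h0 j])
  have hpos := hR.dotProduct_mulVec_pos hr
  simp only [star_trivial] at hpos
  have hdiag : (S * R * Sᵀ) i i = S i ⬝ᵥ R *ᵥ S i := by
    simp only [mul_apply, dotProduct, mulVec, transpose_apply, Finset.sum_mul, Finset.mul_sum]
    rw [Finset.sum_comm]
    apply Finset.sum_congr rfl; intro x _
    apply Finset.sum_congr rfl; intro y _
    ring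
  rw [hS] at hdiag
  simp only [Matrix.zero_apply] at hdiag
  rw [← hdiag] at hpos
  exact lt_irrefl 0 hpos

/-- unique minimizer of the equality-constrained quadratic problem,
expressed via the Moore–Penrose pseudoinverse `Lp` of `L = A R⁻¹ Aᵀ`
(characterized by the four Penrose conditions). -/
theorem stmt0 {m n : ℕ} (R : Matrix (Fin m) (Fin m) ℝ) (hR : R.PosDef)
    (h : Fin m → ℝ) (A : Matrix (Fin n) (Fin m) ℝ) (b : Fin n → ℝ)
    (hb : ∃ x, A *ᵥ x = b)
    (L : Matrix (Fin n) (Fin n) ℝ) (hL : L = A * R⁻¹ * Aᵀ)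
    (Lp : Matrix (Fin n) (Fin n) ℝ)
    (hp1 : L * Lp * L = L) (hp2 : Lp * L * Lp = Lp)
    (hp3 : (L * Lp)ᵀ = L * Lp) (hp4 : (Lp * L)ᵀ = Lp * L)
    (xstar : Fin m → ℝ)
    (hx : xstar = R⁻¹ *ᵥ (Aᵀ *ᵥ (Lp *ᵥ b)) + (R⁻¹ * Aᵀ * Lp * A - 1) *ᵥ (R⁻¹ *ᵥ h)) :
    A *ᵥ xstar = b ∧
      ∀ x : Fin m → ℝ, A *ᵥ x = b → x ≠ xstar →
        (1 / 2) * (xstar ⬝ᵥ R *ᵥ xstar) + h ⬝ᵥ xstar <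
          (1 / 2) * (x ⬝ᵥ R *ᵥ x) + h ⬝ᵥ x := by
  have hRdet : IsUnit R.det := isUnit_iff_ne_zero.mpr hR.det_pos.ne'
  have hRR : R * R⁻¹ = 1 := Matrix.mul_nonsing_inv R hRdet
  have hRsym : Rᵀ = R := hR.1
  have hRinv : R⁻¹.PosDef := hR.inv
  -- key fact : L * Lp * A = A
  have key : L * Lp * A = A := by
    have hSfac : A - L * Lp * A = (1 - L * Lp) * A := by
      rw [Matrix.sub_mul, Matrix.one_mul]
    have hStr : (A - L * Lp * A)ᵀ = Aᵀ * (1 - L * Lp) := by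
      rw [transpose_sub, transpose_mul, hp3, Matrix.mul_sub, Matrix.mul_one]
    have hS : (A - L * Lp * A) * R⁻¹ * (A - L * Lp * A)ᵀ = 0 := by
      calc (A - L * Lp * A) * R⁻¹ * (A - L * Lp * A)ᵀ
          = ((1 - L * Lp) * A) * R⁻¹ * (Aᵀ * (1 - L * Lp)) := by rw [← hSfac, hStr]
        _ = (1 - L * Lp) * (A * R⁻¹ * Aᵀ) * (1 - L * Lp) := by
            simp only [Matrix.mul_assoc]
        _ = ((1 - L * Lp) * L) * (1 - L * Lp) := by rw [← hL]
        _ = 0 := by rw [Matrix.sub_mul, Matrix.one_mul, hp1, sub_self, Matrix.zero_mul]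
    have h0 := zero_of_conj hRinv hS
    exact (sub_eq_zero.mp h0).symm
  obtain ⟨x0, hx0⟩ := hb
  -- restate xstar with matrix products
  have hx' : xstar = (R⁻¹ * Aᵀ * Lp) *ᵥ b + ((R⁻¹ * Aᵀ * Lp * A - 1) * R⁻¹) *ᵥ h := by
    rw [hx, mulVec_mulVec, mulVec_mulVec, mulVec_mulVec, Matrix.mul_assoc]
  -- feasibility
  have hM1 : A * (R⁻¹ * Aᵀ * Lp) = L * Lp := by
    rw [hL]; simp only [Matrix.mul_assoc]
  have hM2 : A * ((R⁻¹ * Aᵀ * Lp * A - 1) * R⁻¹) = (L * Lp * A - A) * R⁻¹ := by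
    rw [hL]
    simp only [Matrix.sub_mul, Matrix.mul_sub, Matrix.one_mul, Matrix.mul_one, Matrix.mul_assoc]
  have hfeas : A *ᵥ xstar = b := by
    rw [hx', mulVec_add, mulVec_mulVec, mulVec_mulVec, hM1, hM2, key, sub_self,
      Matrix.zero_mul, zero_mulVec, add_zero, ← hx0, mulVec_mulVec, key]
  refine ⟨hfeas, ?_⟩
  -- gradient is in the range of Aᵀ
  have hgrad : R *ᵥ xstar + h = Aᵀ *ᵥ (Lp *ᵥ b + (Lp * A * R⁻¹) *ᵥ h) := by
    have hN1 : R * (R⁻¹ * Aᵀ * Lp) = Aᵀ * Lp := by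
      rw [← Matrix.mul_assoc, ← Matrix.mul_assoc, hRR, Matrix.one_mul]
    have hN2 : R * ((R⁻¹ * Aᵀ * Lp * A - 1) * R⁻¹) = Aᵀ * Lp * A * R⁻¹ - 1 := by
      calc R * ((R⁻¹ * Aᵀ * Lp * A - 1) * R⁻¹)
          = R * (R⁻¹ * (Aᵀ * (Lp * (A * R⁻¹))) - R⁻¹) := by
            rw [Matrix.sub_mul, Matrix.one_mul]; simp only [Matrix.mul_assoc]
        _ = R * (R⁻¹ * (Aᵀ * (Lp * (A * R⁻¹)))) - R * R⁻¹ := by rw [Matrix.mul_sub]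
        _ = Aᵀ * Lp * A * R⁻¹ - 1 := by
            rw [← Matrix.mul_assoc, hRR, Matrix.one_mul]
            simp only [Matrix.mul_assoc]
    rw [hx', mulVec_add, mulVec_mulVec, mulVec_mulVec, hN1, hN2, sub_mulVec, one_mulVec,
      mulVec_add, mulVec_mulVec, mulVec_mulVec]
    simp only [Matrix.mul_assoc]
    abel
  intro x hxf hxne
  set d : Fin m → ℝ := x - xstar with hd
  have hdne : d ≠ 0 := sub_ne_zero.mpr hxne
  have hAd : A *ᵥ d = 0 := by rw [hd, mulVec_sub, hxf, hfeas, sub_self]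
  have horth : d ⬝ᵥ (R *ᵥ xstar + h) = 0 := by
    rw [hgrad, dotProduct_mulVec, vecMul_transpose, hAd, zero_dotProduct]
  have hpos : 0 < d ⬝ᵥ R *ᵥ d := by
    have := hR.dotProduct_mulVec_pos hdne
    simpa using this
  have hsymm : xstar ⬝ᵥ R *ᵥ d = d ⬝ᵥ R *ᵥ xstar := by
    rw [dotProduct_mulVec, ← mulVec_transpose, hRsym, dotProduct_comm]
  have hxd : x = xstar + d := by rw [hd]; abel
  have horth' : d ⬝ᵥ R *ᵥ xstar + d ⬝ᵥ h = 0 := by rw [← dotProduct_add]; exact horth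
  have hdh : h ⬝ᵥ d = d ⬝ᵥ h := dotProduct_comm h d
  rw [hxd, mulVec_add, dotProduct_add, add_dotProduct, add_dotProduct, dotProduct_add]
  linarith [hpos, hsymm, horth', hdh]
end

section
/- Let G = (V,E,W) be a connected weighted graph and Z ⊆ V nonempty. Let L̄ be the restricted Laplacian obtained by deleting rows and columns in Z from L = D − W. Then L̄ is invertible, and for all v,w ∈ V∖Z: (L̄⁻¹)_{vw} = (L̄⁻¹)_{ww} · P_v(T_w < T_Z), and (L̄⁻¹)_{ww} = (1/d_w) · E_w[ Σ_{k=0}^{T_Z} 1{X_k = w} ], where X is the weighted random walk on G, T_A denotes the hitting time of A, and d_w is the weighted degree of w. -/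
open scoped Classical
set_option linter.unusedSectionVars false
set_option linter.unusedVariables false
set_option maxHeartbeats 1600000

/-- One-step transition probability of the weighted random walk: `P v u = W v u / d v`. -/
noncomputable def stepProb {V : Type*} [Fintype V] (W : V → V → ℝ) (a c : V) : ℝ :=
  W a c / ∑ u, W a u

/-- `P_v(T_w < T_Z)`: probability that the weighted random walk started at `v`
hits `w` strictly before hitting `Z`, written as a sum over finite paths. -/
noncomputable def hitBefore {V : Type*} [Fintype V] (W : V → V → ℝ)
    (Z : Finset V) (v w : V) : ℝ :=
  ∑' k : ℕ, ∑ x : Fin (k + 1) → V,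
    if x 0 = v ∧ x (Fin.last k) = w ∧ (∀ i, x i ∉ Z) ∧
        (∀ i : Fin (k + 1), i ≠ Fin.last k → x i ≠ w) then
      ∏ i : Fin k, stepProb W (x i.castSucc) (x i.succ)
    else 0

/-- `E_w[∑_{k=0}^{T_Z} 1_{X_k = w}]`: expected number of visits to `w` before
hitting `Z`, for the walk started at `w` (note `X_{T_Z} ∈ Z ≠ w`). -/
noncomputable def occupation {V : Type*} [Fintype V] (W : V → V → ℝ)
    (Z : Finset V) (w : V) : ℝ :=
  ∑' k : ℕ, ∑ x : Fin (k + 1) → V,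
    if x 0 = w ∧ x (Fin.last k) = w ∧ (∀ i, x i ∉ Z) then
      ∏ i : Fin k, stepProb W (x i.castSucc) (x i.succ)
    else 0

lemma sum_path_cons {S : Type*} [Fintype S] (n : ℕ) (H : (Fin (n+2) → S) → ℝ) :
    ∑ y : Fin (n+2) → S, H y = ∑ a : S, ∑ y : Fin (n+1) → S, H (Fin.cons a y) := by
  rw [← Fintype.sum_equiv (Fin.consEquiv (fun _ => S)) _ H (fun p => rfl)]
  rw [Fintype.sum_prod_type]
  rfl

lemma prod_step_cons {S : Type*} (n : ℕ) (step : S → S → ℝ) (a : S) (y : Fin (n+1) → S) :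
    (∏ i : Fin (n+1), step ((Fin.cons a y : Fin (n+2) → S) i.castSucc)
      ((Fin.cons a y : Fin (n+2) → S) i.succ))
    = step a (y 0) * ∏ i : Fin n, step (y i.castSucc) (y i.succ) := by
  rw [Fin.prod_univ_succ]
  simp [← Fin.succ_castSucc]

lemma cons_last {S : Type*} (n : ℕ) (a : S) (y : Fin (n+1) → S) :
    (Fin.cons a y : Fin (n+2) → S) (Fin.last (n+1)) = y (Fin.last n) := by
  rw [← Fin.succ_last, Fin.cons_succ]

lemma cons_avoid {S : Type*} (n : ℕ) (a c : S) (y : Fin (n+1) → S) :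
    (∀ i : Fin (n+2), i ≠ Fin.last (n+1) → (Fin.cons a y : Fin (n+2) → S) i ≠ c)
    ↔ (a ≠ c ∧ ∀ i : Fin (n+1), i ≠ Fin.last n → y i ≠ c) := by
  rw [Fin.forall_fin_succ]
  simp only [Fin.cons_zero, Fin.cons_succ, ← Fin.succ_last]
  constructor
  · rintro ⟨h0, hs⟩
    refine ⟨h0 (Fin.succ_ne_zero _).symm, fun i hi => hs i (fun he => hi (Fin.succ_injective _ he))⟩
  · rintro ⟨h0, hs⟩
    exact ⟨fun _ => h0, fun i hi => hs i (fun he => hi (by rw [he]))⟩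

section Dev
variable {V : Type*} [Fintype V] [DecidableEq V] (W : V → V → ℝ) (Z : Finset V)

noncomputable def gS (k : ℕ) (a c : {v : V // v ∉ Z}) : ℝ :=
  ∑ y : Fin (k + 1) → {v : V // v ∉ Z},
    if y 0 = a ∧ y (Fin.last k) = c then
      ∏ i : Fin k, stepProb W (y i.castSucc).1 (y i.succ).1
    else 0

noncomputable def fS (k : ℕ) (a c : {v : V // v ∉ Z}) : ℝ :=
  ∑ y : Fin (k + 1) → {v : V // v ∉ Z},
    if y 0 = a ∧ y (Fin.last k) = c ∧ (∀ i : Fin (k + 1), i ≠ Fin.last k → y i ≠ c) then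
      ∏ i : Fin k, stepProb W (y i.castSucc).1 (y i.succ).1
    else 0


noncomputable def Pmat : Matrix {v : V // v ∉ Z} {v : V // v ∉ Z} ℝ :=
  Matrix.of fun a c => stepProb W a.1 c.1

lemma stepProb_nonneg (hnonneg : ∀ v w, 0 ≤ W v w) (a c : V) : 0 ≤ stepProb W a c :=
  div_nonneg (hnonneg a c) (Finset.sum_nonneg fun u _ => hnonneg a u)

lemma prod_step_nonneg (hnonneg : ∀ v w, 0 ≤ W v w) {k : ℕ}
    (y : Fin (k + 1) → {v : V // v ∉ Z}) :
    0 ≤ ∏ i : Fin k, stepProb W (y i.castSucc).1 (y i.succ).1 :=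
  Finset.prod_nonneg fun i _ => stepProb_nonneg W hnonneg _ _

lemma gS_nonneg (hnonneg : ∀ v w, 0 ≤ W v w) (k : ℕ) (a c : {v : V // v ∉ Z}) :
    0 ≤ gS W Z k a c := by
  refine Finset.sum_nonneg fun y _ => ?_
  split
  · exact prod_step_nonneg W Z hnonneg y
  · exact le_rfl

lemma fS_nonneg (hnonneg : ∀ v w, 0 ≤ W v w) (k : ℕ) (a c : {v : V // v ∉ Z}) :
    0 ≤ fS W Z k a c := by
  refine Finset.sum_nonneg fun y _ => ?_
  split
  · exact prod_step_nonneg W Z hnonneg y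
  · exact le_rfl

lemma fS_le_gS (hnonneg : ∀ v w, 0 ≤ W v w) (k : ℕ) (a c : {v : V // v ∉ Z}) :
    fS W Z k a c ≤ gS W Z k a c := by
  refine Finset.sum_le_sum fun y _ => ?_
  by_cases h : y 0 = a ∧ y (Fin.last k) = c ∧ (∀ i : Fin (k + 1), i ≠ Fin.last k → y i ≠ c)
  · rw [if_pos h, if_pos ⟨h.1, h.2.1⟩]
  · rw [if_neg h]
    split
    · exact prod_step_nonneg W Z hnonneg y
    · exact le_rfl

lemma gS_zero (a c : {v : V // v ∉ Z}) : gS W Z 0 a c = if a = c then 1 else 0 := by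
  rw [gS]
  rw [Fintype.sum_equiv (Equiv.funUnique (Fin 1) {v : V // v ∉ Z})
    _ (fun b => if b = a ∧ b = c then 1 else 0) (fun y => by
      simp [Equiv.funUnique, Fin.last])]
  by_cases h : a = c
  · subst h; simp
  · rw [Finset.sum_eq_zero]
    · simp [h]
    intro b _
    rw [if_neg]
    rintro ⟨rfl, rfl⟩
    exact h rfl

lemma prod_step_cons' (k : ℕ) (a' : {v : V // v ∉ Z}) (y : Fin (k+1) → {v : V // v ∉ Z}) :
    (∏ i : Fin (k+1), stepProb W ((Fin.cons a' y : Fin (k+2) → _) i.castSucc).1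
      ((Fin.cons a' y : Fin (k+2) → _) i.succ).1)
    = stepProb W a'.1 (y 0).1 * ∏ i : Fin k, stepProb W (y i.castSucc).1 (y i.succ).1 :=
  prod_step_cons k (fun u v => stepProb W u.1 v.1) a' y

lemma gS_succ (k : ℕ) (a c : {v : V // v ∉ Z}) :
    gS W Z (k+1) a c = ∑ b, stepProb W a.1 b.1 * gS W Z k b c := by
  rw [gS, sum_path_cons]
  have hmid : ∀ a' : {v : V // v ∉ Z}, ∀ y : Fin (k+1) → {v : V // v ∉ Z},
      (if (Fin.cons a' y : Fin (k+2) → _) 0 = a ∧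
          (Fin.cons a' y : Fin (k+2) → _) (Fin.last (k+1)) = c then
        ∏ i : Fin (k+1), stepProb W ((Fin.cons a' y : Fin (k+2) → _) i.castSucc).1
          ((Fin.cons a' y : Fin (k+2) → _) i.succ).1
      else 0)
      = if a' = a then (if y (Fin.last k) = c then
          stepProb W a'.1 (y 0).1 *
            ∏ i : Fin k, stepProb W (y i.castSucc).1 (y i.succ).1 else 0) else 0 := by
    intro a' y
    rw [Fin.cons_zero, cons_last, prod_step_cons']
    by_cases h1 : a' = a <;> by_cases h2 : y (Fin.last k) = c <;> simp [h1, h2]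
  simp only [hmid]
  rw [Finset.sum_comm]
  have hcol : ∀ y : Fin (k+1) → {v : V // v ∉ Z},
      (∑ a' : {v : V // v ∉ Z}, if a' = a then (if y (Fin.last k) = c then
        stepProb W a'.1 (y 0).1 * ∏ i : Fin k, stepProb W (y i.castSucc).1 (y i.succ).1
        else 0) else 0)
      = (if y (Fin.last k) = c then
          stepProb W a.1 (y 0).1 * ∏ i : Fin k, stepProb W (y i.castSucc).1 (y i.succ).1
          else 0) := by
    intro y
    rw [Finset.sum_ite_eq' Finset.univ a]
    simp
  simp only [hcol]
  have hrhs : ∀ b : {v : V // v ∉ Z}, stepProb W a.1 b.1 * gS W Z k b c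
      = ∑ y : Fin (k+1) → {v : V // v ∉ Z}, if b = y 0 ∧ y (Fin.last k) = c then
          stepProb W a.1 (y 0).1 * ∏ i : Fin k, stepProb W (y i.castSucc).1 (y i.succ).1
        else 0 := by
    intro b
    rw [gS, Finset.mul_sum]
    refine Finset.sum_congr rfl fun y _ => ?_
    by_cases h1 : y 0 = b
    · subst h1; by_cases h2 : y (Fin.last k) = c <;> simp [h2]
    · rw [if_neg (fun h => h1 h.1), mul_zero, if_neg (fun h => h1 h.1.symm)]
  simp only [hrhs]
  rw [Finset.sum_comm]
  refine Finset.sum_congr rfl fun y _ => ?_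
  rw [show (∑ b : {v : V // v ∉ Z}, if b = y 0 ∧ y (Fin.last k) = c then
      stepProb W a.1 (y 0).1 * ∏ i : Fin k, stepProb W (y i.castSucc).1 (y i.succ).1 else 0)
    = ∑ b : {v : V // v ∉ Z}, if b = y 0 then (if y (Fin.last k) = c then
      stepProb W a.1 (y 0).1 * ∏ i : Fin k, stepProb W (y i.castSucc).1 (y i.succ).1 else 0)
      else 0 from Finset.sum_congr rfl fun b _ => by
        by_cases h1 : b = y 0 <;> by_cases h2 : y (Fin.last k) = c <;> simp [h1, h2]]
  rw [Finset.sum_ite_eq' Finset.univ (y 0)]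
  simp

lemma sum_path_one {S : Type*} [Fintype S] (G : S → ℝ) :
    ∑ y : Fin 1 → S, G (y 0) = ∑ b : S, G b :=
  Fintype.sum_equiv (Equiv.funUnique (Fin 1) S) _ _ (fun y => rfl)

lemma fS_zero (a c : {v : V // v ∉ Z}) : fS W Z 0 a c = if a = c then 1 else 0 := by
  rw [fS]
  rw [show (∑ y : Fin 1 → {v : V // v ∉ Z},
      if y 0 = a ∧ y (Fin.last 0) = c ∧
          (∀ i : Fin 1, i ≠ Fin.last 0 → y i ≠ c) then
        ∏ i : Fin 0, stepProb W (y i.castSucc).1 (y i.succ).1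
      else 0)
    = ∑ y : Fin 1 → {v : V // v ∉ Z}, (fun b => if b = a ∧ b = c then (1:ℝ) else 0) (y 0) from
    Finset.sum_congr rfl fun y _ => by
      have h0 : y (Fin.last 0) = y 0 := congrArg y (Subsingleton.elim _ _)
      have hv : ∀ i : Fin 1, i ≠ Fin.last 0 → y i ≠ c :=
        fun i hi => absurd (Subsingleton.elim i (Fin.last 0)) hi
      show (if y 0 = a ∧ y (Fin.last 0) = c ∧ (∀ i : Fin 1, i ≠ Fin.last 0 → y i ≠ c) then
          ∏ i : Fin 0, stepProb W (y i.castSucc).1 (y i.succ).1 else 0)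
        = if y 0 = a ∧ y 0 = c then (1:ℝ) else 0
      by_cases h1 : y 0 = a
      · by_cases h2 : y 0 = c
        · rw [if_pos ⟨h1, h0.trans h2, hv⟩, if_pos ⟨h1, h2⟩]; simp
        · rw [if_neg (fun h => h2 (h0.symm.trans h.2.1)), if_neg (fun h => h2 h.2)]
      · rw [if_neg (fun h => h1 h.1), if_neg (fun h => h1 h.1)]]
  rw [sum_path_one (fun b => if b = a ∧ b = c then (1:ℝ) else 0)]
  by_cases h : a = c
  · subst h; simp
  · rw [Finset.sum_eq_zero]
    · simp [h]
    intro b _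
    rw [if_neg]
    rintro ⟨rfl, rfl⟩
    exact h rfl

lemma fS_succ_self (k : ℕ) (c : {v : V // v ∉ Z}) : fS W Z (k+1) c c = 0 := by
  rw [fS]
  refine Finset.sum_eq_zero fun y _ => ?_
  rw [if_neg]
  rintro ⟨h0, hl, hav⟩
  exact hav 0 Fin.last_pos.ne (by rw [h0])

lemma fS_succ (k : ℕ) (a c : {v : V // v ∉ Z}) (hac : a ≠ c) :
    fS W Z (k+1) a c = ∑ b, stepProb W a.1 b.1 * fS W Z k b c := by
  rw [fS, sum_path_cons]
  have hmid : ∀ a' : {v : V // v ∉ Z}, ∀ y : Fin (k+1) → {v : V // v ∉ Z},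
      (if (Fin.cons a' y : Fin (k+2) → _) 0 = a ∧
          (Fin.cons a' y : Fin (k+2) → _) (Fin.last (k+1)) = c ∧
          (∀ i : Fin (k+2), i ≠ Fin.last (k+1) → (Fin.cons a' y : Fin (k+2) → _) i ≠ c) then
        ∏ i : Fin (k+1), stepProb W ((Fin.cons a' y : Fin (k+2) → _) i.castSucc).1
          ((Fin.cons a' y : Fin (k+2) → _) i.succ).1
      else 0)
      = if a' = a then (if y (Fin.last k) = c ∧
            (∀ i : Fin (k+1), i ≠ Fin.last k → y i ≠ c) then
          stepProb W a'.1 (y 0).1 *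
            ∏ i : Fin k, stepProb W (y i.castSucc).1 (y i.succ).1 else 0) else 0 := by
    intro a' y
    rw [Fin.cons_zero, cons_last, prod_step_cons']
    simp only [cons_avoid]
    by_cases h1 : a' = a
    · subst h1
      by_cases h2 : y (Fin.last k) = c ∧ (∀ i : Fin (k+1), i ≠ Fin.last k → y i ≠ c)
      · rw [if_pos ⟨rfl, h2.1, hac, h2.2⟩, if_pos rfl, if_pos h2]
      · rw [if_pos rfl, if_neg h2, if_neg]
        rintro ⟨-, hl, -, hav⟩
        exact h2 ⟨hl, hav⟩
    · rw [if_neg h1, if_neg]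
      rintro ⟨h, -⟩
      exact h1 h
  simp only [hmid]
  rw [Finset.sum_comm]
  have hcol : ∀ y : Fin (k+1) → {v : V // v ∉ Z},
      (∑ a' : {v : V // v ∉ Z}, if a' = a then (if y (Fin.last k) = c ∧
          (∀ i : Fin (k+1), i ≠ Fin.last k → y i ≠ c) then
        stepProb W a'.1 (y 0).1 * ∏ i : Fin k, stepProb W (y i.castSucc).1 (y i.succ).1
        else 0) else 0)
      = (if y (Fin.last k) = c ∧ (∀ i : Fin (k+1), i ≠ Fin.last k → y i ≠ c) then
          stepProb W a.1 (y 0).1 * ∏ i : Fin k, stepProb W (y i.castSucc).1 (y i.succ).1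
          else 0) := by
    intro y
    rw [Finset.sum_ite_eq' Finset.univ a]
    simp
  simp only [hcol]
  have hrhs : ∀ b : {v : V // v ∉ Z}, stepProb W a.1 b.1 * fS W Z k b c
      = ∑ y : Fin (k+1) → {v : V // v ∉ Z}, if b = y 0 ∧ (y (Fin.last k) = c ∧
          (∀ i : Fin (k+1), i ≠ Fin.last k → y i ≠ c)) then
          stepProb W a.1 (y 0).1 * ∏ i : Fin k, stepProb W (y i.castSucc).1 (y i.succ).1
        else 0 := by
    intro b
    rw [fS, Finset.mul_sum]
    refine Finset.sum_congr rfl fun y _ => ?_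
    by_cases h1 : y 0 = b
    · subst h1
      by_cases h2 : y (Fin.last k) = c ∧ (∀ i : Fin (k+1), i ≠ Fin.last k → y i ≠ c)
      · rw [if_pos ⟨rfl, h2.1, h2.2⟩, if_pos ⟨rfl, h2⟩]
      · rw [if_neg, mul_zero, if_neg]
        · rintro ⟨-, h⟩; exact h2 h
        · rintro ⟨-, hl, hav⟩; exact h2 ⟨hl, hav⟩
    · rw [if_neg (fun h => h1 h.1), mul_zero, if_neg (fun h => h1 h.1.symm)]
  simp only [hrhs]
  rw [Finset.sum_comm]
  refine Finset.sum_congr rfl fun y _ => ?_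
  rw [show (∑ b : {v : V // v ∉ Z}, if b = y 0 ∧ (y (Fin.last k) = c ∧
      (∀ i : Fin (k+1), i ≠ Fin.last k → y i ≠ c)) then
      stepProb W a.1 (y 0).1 * ∏ i : Fin k, stepProb W (y i.castSucc).1 (y i.succ).1 else 0)
    = ∑ b : {v : V // v ∉ Z}, if b = y 0 then (if y (Fin.last k) = c ∧
      (∀ i : Fin (k+1), i ≠ Fin.last k → y i ≠ c) then
      stepProb W a.1 (y 0).1 * ∏ i : Fin k, stepProb W (y i.castSucc).1 (y i.succ).1 else 0)
      else 0 from Finset.sum_congr rfl fun b _ => by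
        by_cases h1 : b = y 0
        · subst h1; by_cases h2 : y (Fin.last k) = c ∧
            (∀ i : Fin (k+1), i ≠ Fin.last k → y i ≠ c)
          · rw [if_pos ⟨rfl, h2⟩, if_pos rfl, if_pos h2]
          · rw [if_neg (fun h => h2 h.2), if_pos rfl, if_neg h2]
        · rw [if_neg (fun h => h1 h.1), if_neg h1]]
  rw [Finset.sum_ite_eq' Finset.univ (y 0)]
  simp

lemma gS_eq_pow (k : ℕ) (a c : {v : V // v ∉ Z}) : gS W Z k a c = (Pmat W Z ^ k) a c := by
  induction k generalizing a with
  | zero => rw [gS_zero, pow_zero, Matrix.one_apply]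
  | succ k ih =>
    rw [gS_succ, pow_succ', Matrix.mul_apply]
    exact Finset.sum_congr rfl fun b _ => by rw [ih]; rfl

lemma pow_eq_conv (c : {v : V // v ∉ Z}) : ∀ (k : ℕ) (a : {v : V // v ∉ Z}),
    (Pmat W Z ^ k) a c
      = ∑ j ∈ Finset.range (k+1), fS W Z j a c * (Pmat W Z ^ (k - j)) c c := by
  intro k
  induction k with
  | zero =>
    intro a
    rw [Finset.sum_range_one, fS_zero, pow_zero, Matrix.one_apply, Matrix.one_apply_eq, mul_one]
  | succ k ih =>
    intro a
    by_cases hac : a = c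
    · subst hac
      rw [Finset.sum_range_succ']
      rw [Finset.sum_eq_zero (fun j _ => by rw [fS_succ_self, zero_mul])]
      rw [fS_zero, if_pos rfl, Nat.sub_zero, one_mul, zero_add]
    · have key : ∀ j, (∑ b, Pmat W Z a b * (fS W Z j b c * (Pmat W Z ^ (k - j)) c c))
          = fS W Z (j+1) a c * (Pmat W Z ^ (k - j)) c c := by
        intro j
        rw [fS_succ _ _ _ _ _ hac, Finset.sum_mul]
        exact Finset.sum_congr rfl fun b _ => by rw [mul_assoc]; rfl
      rw [pow_succ', Matrix.mul_apply]
      rw [Finset.sum_congr rfl fun b _ => by rw [ih b]]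
      rw [Finset.sum_congr rfl (fun b _ => Finset.mul_sum _ _ _), Finset.sum_comm]
      rw [Finset.sum_congr rfl fun j _ => key j]
      conv_rhs => rw [Finset.sum_range_succ']
      rw [fS_zero, if_neg hac, zero_mul, add_zero]
      exact Finset.sum_congr rfl fun j hj => by rw [Nat.succ_sub_succ]

lemma sum_S_le (a : V) (hnn : ∀ v w, 0 ≤ W v w) :
    ∑ b : {v : V // v ∉ Z}, W a b.1 ≤ ∑ u, W a u := by
  rw [← Finset.sum_subtype (Finset.univ.filter (fun v => v ∉ Z)) (by simp) (fun v => W a v)]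
  exact Finset.sum_le_univ_sum_of_nonneg fun u => hnn a u

lemma sum_S_add_le (a b : V) (hb : b ∈ Z) (hnn : ∀ v w, 0 ≤ W v w) :
    (∑ c : {v : V // v ∉ Z}, W a c.1) + W a b ≤ ∑ u, W a u := by
  rw [← Finset.sum_subtype (Finset.univ.filter (fun v => v ∉ Z)) (by simp) (fun v => W a v)]
  rw [add_comm, ← Finset.sum_insert (show b ∉ Finset.univ.filter (fun v => v ∉ Z) by simp [hb])]
  exact Finset.sum_le_univ_sum_of_nonneg fun u => hnn a u

lemma pow_apply_nonneg (hnn : ∀ v w, 0 ≤ W v w) (n : ℕ) (a c : {v : V // v ∉ Z}) :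
    0 ≤ (Pmat W Z ^ n) a c := by
  rw [← gS_eq_pow]; exact gS_nonneg W Z hnn n a c

/-- row sums of matrix powers -/
noncomputable def qrow (n : ℕ) (a : {v : V // v ∉ Z}) : ℝ := ∑ c, (Pmat W Z ^ n) a c

lemma qrow_zero (a : {v : V // v ∉ Z}) : qrow W Z 0 a = 1 := by
  rw [qrow]
  simp [Matrix.one_apply]

lemma rowsum_le_one (hnn : ∀ v w, 0 ≤ W v w) (a : {v : V // v ∉ Z}) :
    ∑ b : {v : V // v ∉ Z}, Pmat W Z a b ≤ 1 := by
  have : ∑ b : {v : V // v ∉ Z}, Pmat W Z a b = (∑ b : {v : V // v ∉ Z}, W a.1 b.1) / ∑ u, W a.1 u := by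
    rw [Finset.sum_div]; rfl
  rw [this]
  rcases eq_or_lt_of_le (Finset.sum_nonneg (fun u _ => hnn a.1 u)) with h | h
  · rw [← h, div_zero]; exact zero_le_one
  · rw [div_le_one h]
    exact sum_S_le W Z a.1 hnn

lemma qrow_add (n s : ℕ) (a : {v : V // v ∉ Z}) :
    qrow W Z (n + s) a = ∑ b, (Pmat W Z ^ n) a b * qrow W Z s b := by
  rw [qrow]
  simp only [qrow, Finset.mul_sum]
  rw [Finset.sum_comm]
  refine Finset.sum_congr rfl fun c _ => ?_
  rw [pow_add, Matrix.mul_apply]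

lemma qrow_succ (n : ℕ) (a : {v : V // v ∉ Z}) :
    qrow W Z (n + 1) a = ∑ b, Pmat W Z a b * qrow W Z n b := by
  have := qrow_add W Z 1 n a
  rw [add_comm 1 n] at this
  rw [this]
  simp [pow_one]

lemma qrow_nonneg (hnn : ∀ v w, 0 ≤ W v w) (n : ℕ) (a : {v : V // v ∉ Z}) :
    0 ≤ qrow W Z n a :=
  Finset.sum_nonneg fun c _ => pow_apply_nonneg W Z hnn n a c

lemma qrow_le_one (hnn : ∀ v w, 0 ≤ W v w) (n : ℕ) (a : {v : V // v ∉ Z}) :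
    qrow W Z n a ≤ 1 := by
  induction n generalizing a with
  | zero => rw [qrow_zero]
  | succ n ih =>
    rw [qrow_succ]
    calc ∑ b, Pmat W Z a b * qrow W Z n b
        ≤ ∑ b, Pmat W Z a b * 1 := Finset.sum_le_sum fun b _ =>
          mul_le_mul_of_nonneg_left (ih b) (stepProb_nonneg W hnn _ _)
      _ ≤ 1 := by simpa using rowsum_le_one W Z hnn a

lemma qrow_antitone (hnn : ∀ v w, 0 ≤ W v w) (a : {v : V // v ∉ Z}) :
    Antitone (fun n => qrow W Z n a) := by
  have key : ∀ n, ∀ a : {v : V // v ∉ Z}, qrow W Z (n + 1) a ≤ qrow W Z n a := by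
    intro n
    induction n with
    | zero => intro a; rw [qrow_zero]; exact qrow_le_one W Z hnn 1 a
    | succ n ih =>
      intro a
      rw [qrow_succ, qrow_succ]
      exact Finset.sum_le_sum fun b _ =>
        mul_le_mul_of_nonneg_left (ih b) (stepProb_nonneg W hnn _ _)
  exact antitone_nat_of_succ_le (fun n => key n a)

lemma key_step (hnn : ∀ v w, 0 ≤ W v w) (n : ℕ) (a : {v : V // v ∉ Z}) (b : V)
    (hW : 0 < W a.1 b) (hb : b ∈ Z ∨ ∃ hb : b ∉ Z, qrow W Z n ⟨b, hb⟩ < 1) :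
    qrow W Z (n + 1) a < 1 := by
  have hd : 0 < ∑ u, W a.1 u :=
    lt_of_lt_of_le hW (Finset.single_le_sum (fun u _ => hnn a.1 u) (Finset.mem_univ b))
  rw [qrow_succ]
  rcases hb with hbZ | ⟨hbS, hq⟩
  · calc ∑ b', Pmat W Z a b' * qrow W Z n b'
        ≤ ∑ b', Pmat W Z a b' * 1 := Finset.sum_le_sum fun b' _ =>
          mul_le_mul_of_nonneg_left (qrow_le_one W Z hnn n b') (stepProb_nonneg W hnn _ _)
      _ = (∑ b' : {v : V // v ∉ Z}, W a.1 b'.1) / ∑ u, W a.1 u := by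
          simp only [mul_one]; rw [Finset.sum_div]; rfl
      _ < 1 := by
          rw [div_lt_one hd]
          calc ∑ b' : {v : V // v ∉ Z}, W a.1 b'.1
              < (∑ b' : {v : V // v ∉ Z}, W a.1 b'.1) + W a.1 b := by linarith
            _ ≤ ∑ u, W a.1 u := sum_S_add_le W Z a.1 b hbZ hnn
  · set β : {v : V // v ∉ Z} := ⟨b, hbS⟩
    have hPm : 0 < Pmat W Z a β := div_pos hW hd
    have hsplit := (Finset.add_sum_erase Finset.univ
      (fun b' => Pmat W Z a b' * qrow W Z n b') (Finset.mem_univ β)).symm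
    rw [hsplit]
    have h1 : Pmat W Z a β * qrow W Z n β < Pmat W Z a β * 1 :=
      mul_lt_mul_of_pos_left hq hPm
    have h2 : ∑ b' ∈ Finset.univ.erase β, Pmat W Z a b' * qrow W Z n b'
        ≤ ∑ b' ∈ Finset.univ.erase β, Pmat W Z a b' * 1 :=
      Finset.sum_le_sum fun b' _ =>
        mul_le_mul_of_nonneg_left (qrow_le_one W Z hnn n b') (stepProb_nonneg W hnn _ _)
    calc Pmat W Z a β * qrow W Z n β + ∑ b' ∈ Finset.univ.erase β, Pmat W Z a b' * qrow W Z n b'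
        < Pmat W Z a β * 1 + ∑ b' ∈ Finset.univ.erase β, Pmat W Z a b' * 1 :=
          add_lt_add_of_lt_of_le h1 h2
      _ = ∑ b' : {v : V // v ∉ Z}, Pmat W Z a b' * 1 :=
          Finset.add_sum_erase Finset.univ (fun b' => Pmat W Z a b' * 1) (Finset.mem_univ β)
      _ ≤ 1 := by simpa using rowsum_le_one W Z hnn a

lemma escape (hnn : ∀ v w, 0 ≤ W v w) {x z : V} (hzZ : z ∈ Z)
    (h : Relation.ReflTransGen (fun a c => 0 < W a c) x z) :
    ∀ hx : x ∉ Z, ∃ n, qrow W Z n ⟨x, hx⟩ < 1 := by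
  induction h using Relation.ReflTransGen.head_induction_on with
  | refl => intro hx; exact absurd hzZ hx
  | @head a' c' hac hcz ih =>
    intro hx
    by_cases hc : c' ∈ Z
    · exact ⟨1, key_step W Z hnn 0 ⟨a', hx⟩ c' hac (Or.inl hc)⟩
    · obtain ⟨n, hn⟩ := ih hc
      exact ⟨n + 1, key_step W Z hnn n ⟨a', hx⟩ c' hac (Or.inr ⟨hc, hn⟩)⟩

lemma exists_N_rho [Nonempty {v : V // v ∉ Z}] (hnn : ∀ v w, 0 ≤ W v w)
    (hconn : ∀ v w : V, Relation.ReflTransGen (fun a c => 0 < W a c) v w)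
    (hZ : Z.Nonempty) :
    ∃ (N : ℕ) (ρ : ℝ), 0 < N ∧ 0 ≤ ρ ∧ ρ < 1 ∧ ∀ a, qrow W Z N a ≤ ρ := by
  obtain ⟨z, hz⟩ := hZ
  choose n hn using fun a : {v : V // v ∉ Z} =>
    escape W Z hnn hz (hconn a.1 z) a.2
  set N := 1 + Finset.univ.sup n with hNdef
  have hN : ∀ a, n a ≤ N := fun a =>
    le_trans (Finset.le_sup (Finset.mem_univ a)) (Nat.le_add_left _ _)
  refine ⟨N, Finset.univ.sup' Finset.univ_nonempty (qrow W Z N), by omega, ?_, ?_,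
    fun a => Finset.le_sup' _ (Finset.mem_univ a)⟩
  · obtain ⟨a⟩ := ‹Nonempty {v : V // v ∉ Z}›
    exact le_trans (qrow_nonneg W Z hnn N a) (Finset.le_sup' _ (Finset.mem_univ a))
  · rw [Finset.sup'_lt_iff]
    intro a _
    have h1 : qrow W Z N ⟨a.1, a.2⟩ ≤ qrow W Z (n a) ⟨a.1, a.2⟩ := by
      have := qrow_antitone W Z hnn ⟨a.1, a.2⟩ (hN a)
      exact this
    exact lt_of_le_of_lt (by simpa using h1) (hn a)

lemma qrow_le_rho_pow (hnn : ∀ v w, 0 ≤ W v w) {N : ℕ} {ρ : ℝ} (hρ0 : 0 ≤ ρ)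
    (hq : ∀ a, qrow W Z N a ≤ ρ) :
    ∀ m a, qrow W Z (m * N) a ≤ ρ ^ m := by
  intro m
  induction m with
  | zero => intro a; rw [Nat.zero_mul, qrow_zero, pow_zero]
  | succ m ih =>
    intro a
    have : (m + 1) * N = N + m * N := by ring
    rw [this, qrow_add]
    calc ∑ b, (Pmat W Z ^ N) a b * qrow W Z (m * N) b
        ≤ ∑ b, (Pmat W Z ^ N) a b * ρ ^ m := Finset.sum_le_sum fun b _ =>
          mul_le_mul_of_nonneg_left (ih b) (pow_apply_nonneg W Z hnn N a b)
      _ = qrow W Z N a * ρ ^ m := by rw [← Finset.sum_mul]; rfl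
      _ ≤ ρ * ρ ^ m := mul_le_mul_of_nonneg_right (hq a) (pow_nonneg hρ0 m)
      _ = ρ ^ (m + 1) := by rw [pow_succ]; ring

lemma tendsto_pow_apply [Nonempty {v : V // v ∉ Z}] (hnn : ∀ v w, 0 ≤ W v w)
    (hconn : ∀ v w : V, Relation.ReflTransGen (fun a c => 0 < W a c) v w)
    (hZ : Z.Nonempty) (a c : {v : V // v ∉ Z}) :
    Filter.Tendsto (fun k => (Pmat W Z ^ k) a c) Filter.atTop (nhds 0) := by
  obtain ⟨N, ρ, hN, hρ0, hρ1, hq⟩ := exists_N_rho W Z hnn hconn hZ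
  have hdiv : Filter.Tendsto (fun k : ℕ => k / N) Filter.atTop Filter.atTop :=
    Filter.tendsto_atTop_atTop.2 fun b => ⟨b * N, fun n hn => (Nat.le_div_iff_mul_le hN).2 hn⟩
  have hlim : Filter.Tendsto (fun k : ℕ => ρ ^ (k / N)) Filter.atTop (nhds 0) :=
    (tendsto_pow_atTop_nhds_zero_of_lt_one hρ0 hρ1).comp hdiv
  refine squeeze_zero (fun k => pow_apply_nonneg W Z hnn k a c) (fun k => ?_) hlim
  calc (Pmat W Z ^ k) a c
      ≤ qrow W Z k a := Finset.single_le_sum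
        (fun c' (_ : c' ∈ Finset.univ) => pow_apply_nonneg W Z hnn k a c') (Finset.mem_univ c)
    _ ≤ qrow W Z (k / N * N) a := qrow_antitone W Z hnn a (Nat.div_mul_le_self k N)
    _ ≤ ρ ^ (k / N) := qrow_le_rho_pow W Z hnn hρ0 hq (k / N) a

lemma det_one_sub_ne [Nonempty {v : V // v ∉ Z}] (hnn : ∀ v w, 0 ≤ W v w)
    (hconn : ∀ v w : V, Relation.ReflTransGen (fun a c => 0 < W a c) v w)
    (hZ : Z.Nonempty) :
    (1 - Pmat W Z).det ≠ 0 := by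
  intro h
  obtain ⟨x, hx0, hx⟩ := Matrix.exists_mulVec_eq_zero_iff.2 h
  have hfix : (Pmat W Z).mulVec x = x := by
    rw [Matrix.sub_mulVec, Matrix.one_mulVec, sub_eq_zero] at hx
    exact hx.symm
  have hpow : ∀ n, (Pmat W Z ^ n).mulVec x = x := by
    intro n
    induction n with
    | zero => rw [pow_zero, Matrix.one_mulVec]
    | succ n ih => rw [pow_succ, ← Matrix.mulVec_mulVec, hfix, ih]
  apply hx0
  funext a
  have h1 : Filter.Tendsto (fun n => ((Pmat W Z ^ n).mulVec x) a) Filter.atTop (nhds 0) := by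
    have : ∀ n, ((Pmat W Z ^ n).mulVec x) a = ∑ c, (Pmat W Z ^ n) a c * x c := fun n => rfl
    simp only [this]
    have := tendsto_finset_sum (Finset.univ : Finset {v : V // v ∉ Z})
      (fun c _ => (tendsto_pow_apply W Z hnn hconn hZ a c).mul_const (x c))
    simpa using this
  have h2 : Filter.Tendsto (fun n => ((Pmat W Z ^ n).mulVec x) a) Filter.atTop (nhds (x a)) := by
    simp only [hpow]
    exact tendsto_const_nhds
  have := tendsto_nhds_unique h2 h1
  simpa using this

lemma tendsto_partial_sums [Nonempty {v : V // v ∉ Z}] (hnn : ∀ v w, 0 ≤ W v w)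
    (hconn : ∀ v w : V, Relation.ReflTransGen (fun a c => 0 < W a c) v w)
    (hZ : Z.Nonempty) (a c : {v : V // v ∉ Z}) :
    Filter.Tendsto (fun n => ∑ k ∈ Finset.range n, (Pmat W Z ^ k) a c) Filter.atTop
      (nhds ((1 - Pmat W Z)⁻¹ a c)) := by
  set Q := (1 - Pmat W Z)⁻¹ with hQdef
  have hQ : (1 - Pmat W Z) * Q = 1 :=
    Matrix.mul_nonsing_inv _ (isUnit_iff_ne_zero.2 (det_one_sub_ne W Z hnn hconn hZ))
  have hs : ∀ n, (∑ k ∈ Finset.range n, Pmat W Z ^ k) = (1 - Pmat W Z ^ n) * Q := by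
    intro n
    have h1 : (∑ k ∈ Finset.range n, Pmat W Z ^ k) * (1 - Pmat W Z) = 1 - Pmat W Z ^ n := by
      have := geom_sum_mul (Pmat W Z) n
      calc (∑ k ∈ Finset.range n, Pmat W Z ^ k) * (1 - Pmat W Z)
          = -((∑ k ∈ Finset.range n, Pmat W Z ^ k) * (Pmat W Z - 1)) := by
            rw [← mul_neg, neg_sub]
        _ = -(Pmat W Z ^ n - 1) := by rw [this]
        _ = 1 - Pmat W Z ^ n := by rw [neg_sub]
    calc (∑ k ∈ Finset.range n, Pmat W Z ^ k)
        = (∑ k ∈ Finset.range n, Pmat W Z ^ k) * ((1 - Pmat W Z) * Q) := by rw [hQ, mul_one]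
      _ = ((∑ k ∈ Finset.range n, Pmat W Z ^ k) * (1 - Pmat W Z)) * Q := by rw [mul_assoc]
      _ = (1 - Pmat W Z ^ n) * Q := by rw [h1]
  have hentry : ∀ n, ∑ k ∈ Finset.range n, (Pmat W Z ^ k) a c
      = Q a c - ∑ b, (Pmat W Z ^ n) a b * Q b c := by
    intro n
    have h1 : ∑ k ∈ Finset.range n, (Pmat W Z ^ k) a c
        = (∑ k ∈ Finset.range n, Pmat W Z ^ k) a c := by
      rw [Matrix.sum_apply]
    rw [h1, hs n, Matrix.sub_mul, Matrix.sub_apply, Matrix.one_mul, Matrix.mul_apply]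
  simp only [hentry]
  have h0 : Filter.Tendsto (fun n => ∑ b, (Pmat W Z ^ n) a b * Q b c) Filter.atTop (nhds 0) := by
    have := tendsto_finset_sum (Finset.univ : Finset {v : V // v ∉ Z})
      (fun b _ => (tendsto_pow_apply W Z hnn hconn hZ a b).mul_const (Q b c))
    simpa using this
  have := tendsto_const_nhds (x := Q a c) (f := Filter.atTop (α := ℕ)).sub h0
  simpa using this

lemma sum_path_to_S (n : ℕ) (F : (Fin n → V) → ℝ) (C : (Fin n → V) → Prop)
    {instC : ∀ x, Decidable (C x)} :
    ∑ x : Fin n → V, (if (∀ i, x i ∉ Z) ∧ C x then F x else 0)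
    = ∑ y : Fin n → {v : V // v ∉ Z},
        (if C (fun i => (y i).1) then F (fun i => (y i).1) else 0) := by
  have h1 : ∀ x : Fin n → V, (if (∀ i, x i ∉ Z) ∧ C x then F x else 0)
      = (if (∀ i, x i ∉ Z) then (if C x then F x else 0) else 0) := by
    intro x
    by_cases hp : ∀ i, x i ∉ Z <;> by_cases hc : C x <;> simp [hp, hc]
  rw [Finset.sum_congr rfl fun x _ => h1 x]
  rw [← Finset.sum_filter]
  rw [Finset.sum_subtype (p := fun x : Fin n → V => ∀ i, x i ∉ Z)
    _ (fun x => by simp) (fun x => if C x then F x else 0)]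
  let e : {x : Fin n → V // ∀ i, x i ∉ Z} ≃ (Fin n → {v : V // v ∉ Z}) :=
    Equiv.subtypePiEquivPi (β := fun _ : Fin n => V) (p := fun _ v => v ∉ Z)
  exact Fintype.sum_equiv e (fun x => if C x.1 then F x.1 else 0)
    (fun y => if C (fun i => (y i).1) then F (fun i => (y i).1) else 0) (fun x => rfl)

lemma occupation_eq (w : V) (hw : w ∉ Z) :
    occupation W Z w = ∑' k, gS W Z k ⟨w, hw⟩ ⟨w, hw⟩ := by
  rw [occupation]
  refine tsum_congr fun k => ?_
  refine Eq.trans (Finset.sum_congr rfl (fun x _ => ?_) :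
      _ = ∑ x : Fin (k+1) → V, (if (∀ i, x i ∉ Z) ∧ (x 0 = w ∧ x (Fin.last k) = w) then
        ∏ i : Fin k, stepProb W (x i.castSucc) (x i.succ) else 0)) ?_
  · by_cases h : (∀ i : Fin (k+1), x i ∉ Z) ∧ (x 0 = w ∧ x (Fin.last k) = w)
    · rw [if_pos (show x 0 = w ∧ x (Fin.last k) = w ∧ (∀ i, x i ∉ Z) from by tauto), if_pos h]
    · rw [if_neg (show ¬(x 0 = w ∧ x (Fin.last k) = w ∧ (∀ i, x i ∉ Z)) from by tauto), if_neg h]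
  rw [sum_path_to_S Z (k+1) _ (fun x => x 0 = w ∧ x (Fin.last k) = w)]
  rw [gS]
  exact Finset.sum_congr rfl fun y _ => if_congr (by simp [Subtype.ext_iff]) rfl rfl

lemma hitBefore_eq (v w : V) (hv : v ∉ Z) (hw : w ∉ Z) :
    hitBefore W Z v w = ∑' k, fS W Z k ⟨v, hv⟩ ⟨w, hw⟩ := by
  rw [hitBefore]
  refine tsum_congr fun k => ?_
  refine Eq.trans (Finset.sum_congr rfl (fun x _ => ?_) :
      _ = ∑ x : Fin (k+1) → V, (if (∀ i, x i ∉ Z) ∧ (x 0 = v ∧ x (Fin.last k) = w ∧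
          (∀ i : Fin (k+1), i ≠ Fin.last k → x i ≠ w)) then
        ∏ i : Fin k, stepProb W (x i.castSucc) (x i.succ) else 0)) ?_
  · by_cases h : (∀ i : Fin (k+1), x i ∉ Z) ∧ (x 0 = v ∧ x (Fin.last k) = w ∧
      (∀ i : Fin (k+1), i ≠ Fin.last k → x i ≠ w))
    · rw [if_pos (show x 0 = v ∧ x (Fin.last k) = w ∧ (∀ i, x i ∉ Z) ∧
        (∀ i : Fin (k+1), i ≠ Fin.last k → x i ≠ w) from by tauto), if_pos h]
    · rw [if_neg (show ¬(x 0 = v ∧ x (Fin.last k) = w ∧ (∀ i, x i ∉ Z) ∧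
        (∀ i : Fin (k+1), i ≠ Fin.last k → x i ≠ w)) from by tauto), if_neg h]
  rw [sum_path_to_S Z (k+1) _ (fun x => x 0 = v ∧ x (Fin.last k) = w ∧
    (∀ i : Fin (k+1), i ≠ Fin.last k → x i ≠ w))]
  rw [fS]
  refine Finset.sum_congr rfl fun y _ => if_congr ?_ rfl rfl
  simp [Subtype.ext_iff]

lemma hasSum_pow [Nonempty {v : V // v ∉ Z}] (hnn : ∀ v w, 0 ≤ W v w)
    (hconn : ∀ v w : V, Relation.ReflTransGen (fun a c => 0 < W a c) v w)
    (hZ : Z.Nonempty) (a c : {v : V // v ∉ Z}) :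
    HasSum (fun k => (Pmat W Z ^ k) a c) ((1 - Pmat W Z)⁻¹ a c) :=
  (hasSum_iff_tendsto_nat_of_nonneg (fun k => pow_apply_nonneg W Z hnn k a c) _).2
    (tendsto_partial_sums W Z hnn hconn hZ a c)

lemma summable_fS' [Nonempty {v : V // v ∉ Z}] (hnn : ∀ v w, 0 ≤ W v w)
    (hconn : ∀ v w : V, Relation.ReflTransGen (fun a c => 0 < W a c) v w)
    (hZ : Z.Nonempty) (a c : {v : V // v ∉ Z}) :
    Summable (fun k => fS W Z k a c) :=
  Summable.of_nonneg_of_le (fun k => fS_nonneg W Z hnn k a c)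
    (fun k => (fS_le_gS W Z hnn k a c).trans_eq (gS_eq_pow W Z k a c))
    (hasSum_pow W Z hnn hconn hZ a c).summable

lemma green_conv [Nonempty {v : V // v ∉ Z}] (hnn : ∀ v w, 0 ≤ W v w)
    (hconn : ∀ v w : V, Relation.ReflTransGen (fun a c => 0 < W a c) v w)
    (hZ : Z.Nonempty) (a c : {v : V // v ∉ Z}) :
    (1 - Pmat W Z)⁻¹ a c = (∑' j, fS W Z j a c) * (1 - Pmat W Z)⁻¹ c c := by
  rw [← (hasSum_pow W Z hnn hconn hZ a c).tsum_eq, ← (hasSum_pow W Z hnn hconn hZ c c).tsum_eq]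
  have hnf : Summable (fun k => ‖fS W Z k a c‖) :=
    (summable_fS' W Z hnn hconn hZ a c).congr
      (fun k => (Real.norm_of_nonneg (fS_nonneg W Z hnn k a c)).symm)
  have hng : Summable (fun k => ‖(Pmat W Z ^ k) c c‖) :=
    (hasSum_pow W Z hnn hconn hZ c c).summable.congr
      (fun k => (Real.norm_of_nonneg (pow_apply_nonneg W Z hnn k c c)).symm)
  calc ∑' k, (Pmat W Z ^ k) a c
      = ∑' n, ∑ j ∈ Finset.range (n+1), fS W Z j a c * (Pmat W Z ^ (n - j)) c c :=
        tsum_congr (fun k => pow_eq_conv W Z c k a)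
    _ = (∑' j, fS W Z j a c) * ∑' k, (Pmat W Z ^ k) c c :=
        (tsum_mul_tsum_eq_tsum_sum_range_of_summable_norm hnf hng).symm

lemma deg_pos (hnn : ∀ v w, 0 ≤ W v w)
    (hconn : ∀ v w : V, Relation.ReflTransGen (fun a c => 0 < W a c) v w)
    (hZ : Z.Nonempty) (v : V) (hv : v ∉ Z) : 0 < ∑ u, W v u := by
  obtain ⟨z, hz⟩ := hZ
  rcases (hconn v z).cases_head with heq | ⟨c, hc, -⟩
  · exact absurd (heq ▸ hz) hv
  · exact lt_of_lt_of_le hc (Finset.single_le_sum (fun u _ => hnn v u) (Finset.mem_univ c))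

end Dev

/-- the restricted Laplacian is invertible and its inverse is given
by hitting probabilities and expected occupation times of the random walk. -/
theorem stmt6 {V : Type*} [Fintype V] [DecidableEq V]
    (W : V → V → ℝ)
    (hsymm : ∀ v w, W v w = W w v) (hnonneg : ∀ v w, 0 ≤ W v w)
    (hloop : ∀ v, W v v = 0)
    (hconn : ∀ v w : V, Relation.ReflTransGen (fun a c => 0 < W a c) v w)
    (Z : Finset V) (hZ : Z.Nonempty)
    (Lbar : Matrix {v : V // v ∉ Z} {v : V // v ∉ Z} ℝ)
    (hLbar : ∀ a c, Lbar a c = (if a = c then ∑ u, W a.1 u else 0) - W a.1 c.1) :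
    IsUnit Lbar.det ∧
      ∀ (v w : V) (hv : v ∉ Z) (hw : w ∉ Z),
        Lbar⁻¹ ⟨v, hv⟩ ⟨w, hw⟩ = Lbar⁻¹ ⟨w, hw⟩ ⟨w, hw⟩ * hitBefore W Z v w ∧
        Lbar⁻¹ ⟨w, hw⟩ ⟨w, hw⟩ = (1 / ∑ u, W w u) * occupation W Z w := by
  rcases isEmpty_or_nonempty {v : V // v ∉ Z} with hE | hNE
  · constructor
    · rw [Matrix.det_isEmpty]; exact isUnit_one
    · intro v w hv hw
      exact (hE.false ⟨v, hv⟩).elim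
  · have hd : ∀ a : {v : V // v ∉ Z}, 0 < ∑ u, W a.1 u :=
      fun a => deg_pos W Z hnonneg hconn hZ a.1 a.2
    have hfact : Lbar
        = Matrix.diagonal (fun a : {v : V // v ∉ Z} => ∑ u, W a.1 u) * (1 - Pmat W Z) := by
      ext a c
      rw [Matrix.diagonal_mul, hLbar a c]
      rw [Matrix.sub_apply, Matrix.one_apply]
      rw [mul_sub]
      have h2 : (∑ u, W a.1 u) * Pmat W Z a c = W a.1 c.1 := by
        show (∑ u, W a.1 u) * (W a.1 c.1 / ∑ u, W a.1 u) = W a.1 c.1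
        rw [mul_div_cancel₀ _ (hd a).ne']
      rw [h2]
      congr 1
      by_cases h : a = c <;> simp [h]
    have hQ1 : (1 - Pmat W Z) * (1 - Pmat W Z)⁻¹ = 1 :=
      Matrix.mul_nonsing_inv _ (isUnit_iff_ne_zero.2 (det_one_sub_ne W Z hnonneg hconn hZ))
    have hright : Lbar * ((1 - Pmat W Z)⁻¹
        * Matrix.diagonal (fun c : {v : V // v ∉ Z} => (∑ u, W c.1 u)⁻¹)) = 1 := by
      rw [hfact, mul_assoc, ← mul_assoc (1 - Pmat W Z) (1 - Pmat W Z)⁻¹, hQ1, one_mul,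
        Matrix.diagonal_mul_diagonal]
      rw [show (fun a : {v : V // v ∉ Z} => (∑ u, W a.1 u) * (∑ u, W a.1 u)⁻¹)
        = fun _ => (1:ℝ) from funext fun a => mul_inv_cancel₀ (hd a).ne']
      exact Matrix.diagonal_one
    have hinv : Lbar⁻¹ = (1 - Pmat W Z)⁻¹
        * Matrix.diagonal (fun c : {v : V // v ∉ Z} => (∑ u, W c.1 u)⁻¹) :=
      Matrix.inv_eq_right_inv hright
    have hentry : ∀ a c : {v : V // v ∉ Z},
        Lbar⁻¹ a c = (1 - Pmat W Z)⁻¹ a c * (∑ u, W c.1 u)⁻¹ := by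
      intro a c
      rw [hinv, Matrix.mul_diagonal]
    refine ⟨Matrix.isUnit_det_of_right_inverse hright, fun v w hv hw => ?_⟩
    have hocc : occupation W Z w = (1 - Pmat W Z)⁻¹ ⟨w, hw⟩ ⟨w, hw⟩ := by
      rw [occupation_eq W Z w hw]
      rw [tsum_congr (fun k => gS_eq_pow W Z k ⟨w, hw⟩ ⟨w, hw⟩)]
      exact (hasSum_pow W Z hnonneg hconn hZ ⟨w, hw⟩ ⟨w, hw⟩).tsum_eq
    constructor
    · rw [hentry, hentry]
      rw [green_conv W Z hnonneg hconn hZ ⟨v, hv⟩ ⟨w, hw⟩]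
      rw [hitBefore_eq W Z v w hv hw]
      ring
    · rw [hentry, hocc]
      rw [one_div]
      ring
end

section
/- Modified gambler's ruin with killing: consider states {0,1,...,t+1}, with absorbing states 0 and t+1; from state s ∈ {1,...,t}, the chain moves to s−1 with probability q_s, to s+1 with probability p_s, and jumps directly to t+1 with probability r_s = 1 − p_s − q_s ≥ 0. Define α₁ = α₂ = 1, α_s = α_{s−1} − p_{s−2}q_{s−1}α_{s−2} for s ≥ 3; β₀ = 0, β₁ = β₂ = 1, β_s = β_{s−1} − p_{s−1}q_sβ_{s−2} for s ≥ 3. Then the hitting probabilities f_s = P_s(hit 0 before t+1), which satisfy f_s = q_s f_{s−1} + p_s f_{s+1} for 1 ≤ s ≤ t with f₀ = 1, f_{t+1} = 0, are given by f_s = (p₀q₁/(p₀⋯p_{s−1})) · (α_s β_t/α_{t+1} − β_{s−1}) for 1 ≤ s ≤ t+1, provided all p_s > 0 and α_{t+1} ≠ 0. -/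
/-- modified gambler's ruin with killing: the hitting probabilities
solving the boundary-value recursion are given by the explicit `α`/`β` formula. -/
theorem stmt9 (t : ℕ) (ht : 1 ≤ t) (p q : ℕ → ℝ)
    (hp : ∀ s, s ≤ t → 0 < p s)
    (hq : ∀ s, 1 ≤ s → s ≤ t → 0 < q s)
    (hpq : ∀ s, 1 ≤ s → s ≤ t → p s + q s ≤ 1)
    (hp0 : p 0 < 1) (hq0 : q 0 = 1 - p 0)
    (α β : ℕ → ℝ)
    (hα1 : α 1 = 1) (hα2 : α 2 = 1)
    (hαrec : ∀ s, 3 ≤ s → α s = α (s - 1) - p (s - 2) * q (s - 1) * α (s - 2))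
    (hβ0 : β 0 = 0) (hβ1 : β 1 = 1) (hβ2 : β 2 = 1)
    (hβrec : ∀ s, 3 ≤ s → β s = β (s - 1) - p (s - 1) * q s * β (s - 2))
    (hαt : α (t + 1) ≠ 0)
    (f : ℕ → ℝ) (hf0 : f 0 = 1) (hft : f (t + 1) = 0)
    (hrec : ∀ s, 1 ≤ s → s ≤ t → f s = q s * f (s - 1) + p s * f (s + 1)) :
    ∀ s, 1 ≤ s → s ≤ t + 1 →
      f s = (p 0 * q 1 / ∏ i ∈ Finset.range s, p i) *
        (α s * β t / α (t + 1) - β (s - 1)) := by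
  -- step forms of the recursions
  have hαstep : ∀ m, 1 ≤ m → α (m + 2) = α (m + 1) - p m * q (m + 1) * α m := by
    intro m hm
    have := hαrec (m + 2) (by omega)
    simpa using this
  have hβstep : ∀ m, β (m + 2) = β (m + 1) - p (m + 1) * q (m + 2) * β m := by
    intro m
    rcases Nat.eq_zero_or_pos m with hm | hm
    · subst hm; simp [hβ0, hβ1, hβ2]
    · have := hβrec (m + 2) (by omega)
      simpa using this
  -- key identity
  have key : ∀ s, 1 ≤ s → s ≤ t + 1 →
      (∏ i ∈ Finset.Ico 1 s, p i) * f s = f 1 * α s - q 1 * β (s - 1) := by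
    intro s
    induction s using Nat.strong_induction_on with
    | _ s ih =>
      intro h1 h2
      match s, h1 with
      | 1, _ => simp [hα1, hβ0]
      | 2, _ =>
          have hr := hrec 1 le_rfl (by omega)
          have : (∏ i ∈ Finset.Ico 1 2, p i) * f 2 = p 1 * f 2 := by simp
          rw [this]
          simp only [hf0] at hr
          simp only [hα2, hβ1]
          nlinarith [hr]
      | (m + 3), _ =>
          have hm2t : m + 2 ≤ t := by omega
          have hr := hrec (m + 2) (by omega) hm2t
          have h1' := ih (m + 1) (by omega) (by omega) (by omega)
          have h2' := ih (m + 2) (by omega) (by omega) (by omega)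
          have hprod3 : (∏ i ∈ Finset.Ico 1 (m + 3), p i)
              = (∏ i ∈ Finset.Ico 1 (m + 2), p i) * p (m + 2) := by
            rw [Finset.prod_Ico_succ_top (by omega)]
          have hprod2 : (∏ i ∈ Finset.Ico 1 (m + 2), p i)
              = (∏ i ∈ Finset.Ico 1 (m + 1), p i) * p (m + 1) := by
            rw [Finset.prod_Ico_succ_top (by omega)]
          have hα := hαstep (m + 1) (by omega)
          have hβ := hβstep m
          simp only [show m + 2 - 1 = m + 1 from rfl, show m + 1 - 1 = m from rfl, show m + 3 - 1 = m + 2 from rfl] at h1' h2' ⊢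
          have hr' : p (m + 2) * f (m + 3) = f (m + 2) - q (m + 2) * f (m + 1) := by
            have : (m + 2 : ℕ) - 1 = m + 1 := by omega
            rw [this] at hr
            linarith
          calc (∏ i ∈ Finset.Ico 1 (m + 3), p i) * f (m + 3)
              = (∏ i ∈ Finset.Ico 1 (m + 2), p i) * (p (m + 2) * f (m + 3)) := by
                rw [hprod3]; ring
            _ = (∏ i ∈ Finset.Ico 1 (m + 2), p i) * f (m + 2)
                - q (m + 2) * (p (m + 1) * ((∏ i ∈ Finset.Ico 1 (m + 1), p i) * f (m + 1))) := by
                rw [hr', hprod2]; ring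
            _ = f 1 * α (m + 3) - q 1 * β (m + 2) := by
                rw [h1', h2', hα, hβ]; ring
  -- product positivity
  have hprodpos : ∀ s, s ≤ t + 1 → 0 < ∏ i ∈ Finset.Ico 1 s, p i := by
    intro s hs
    apply Finset.prod_pos
    intro i hi
    simp only [Finset.mem_Ico] at hi
    exact hp i (by omega)
  -- determine f 1
  have hkeyt := key (t + 1) (by omega) le_rfl
  rw [hft, mul_zero] at hkeyt
  have hf1 : f 1 = q 1 * β t / α (t + 1) := by
    have : f 1 * α (t + 1) = q 1 * β ((t + 1) - 1) := by linarith
    simp only [Nat.add_sub_cancel] at this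
    field_simp
    linarith
  -- conclude
  intro s hs1 hs2
  have hk := key s hs1 hs2
  have hP := hprodpos s hs2
  have hPne : (∏ i ∈ Finset.Ico 1 s, p i) ≠ 0 := ne_of_gt hP
  have hp0' : p 0 ≠ 0 := ne_of_gt (hp 0 (by omega))
  have hrange : (∏ i ∈ Finset.range s, p i) = p 0 * ∏ i ∈ Finset.Ico 1 s, p i := by
    rw [Finset.range_eq_Ico, Finset.prod_eq_prod_Ico_succ_bot (by omega)]
  rw [hf1] at hk
  rw [hrange]
  field_simp at hk ⊢
  nlinarith [hk]
end

section
/- For the min-sum voltage algorithm on a cycle with equal weights ω, the L-norm error satisfies ‖ν* − ν̂ᵗ‖²_L = (1/2)‖ν*‖²_L + (ω/2)·Σ_{v=0}^{n−1} ν*_v (2ν*_{ρ(v+2t+2)} − ν*_{ρ(v+2t+3)} − ν*_{ρ(v+2t+1)}), given that ν*_v − ν̂ᵗ_v = (1/2)(ν*_{ρ(v−t−1)} + ν*_{ρ(v+t+1)}) for all v, where ρ(i) = i mod n and ‖ν‖²_L = ω·Σ_{v=0}^{n−1}(ν_{ρ(v+1)} − ν_v)². -/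
/-- min-sum voltage L-norm error identity on the equally weighted
cycle, given the pointwise error relation. -/
theorem stmt14 (n : ℕ) [NeZero n] (ω : ℝ) (hω : 0 < ω) (t : ℕ)
    (νstar νhat : ZMod n → ℝ)
    (herr : ∀ v : ZMod n, νstar v - νhat v =
      (1 / 2) * (νstar (v - ((t : ZMod n) + 1)) + νstar (v + ((t : ZMod n) + 1)))) :
    ω * ∑ v : ZMod n, ((νstar - νhat) (v + 1) - (νstar - νhat) v) ^ 2 =
      (1 / 2) * (ω * ∑ v : ZMod n, (νstar (v + 1) - νstar v) ^ 2) +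
        (ω / 2) * ∑ v : ZMod n,
          νstar v * (2 * νstar (v + (2 * (t : ZMod n) + 2)) -
            νstar (v + (2 * (t : ZMod n) + 3)) - νstar (v + (2 * (t : ZMod n) + 1))) := by
  classical
  set s : ZMod n := (t : ZMod n) + 1 with hs
  have hshift : ∀ (g : ZMod n → ℝ) (c : ZMod n),
      ∑ v : ZMod n, g v = ∑ v : ZMod n, g (v + c) :=
    fun g c => (Fintype.sum_equiv (Equiv.addRight c) (fun v => g (v + c)) g fun v => rfl).symm
  have he : ∀ v : ZMod n, (νstar - νhat) v = (1/2) * (νstar (v - s) + νstar (v + s)) := by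
    intro v; simpa [hs] using herr v
  -- Step 1: rewrite the error-difference sum
  have step1 : ∑ v : ZMod n, ((νstar - νhat) (v + 1) - (νstar - νhat) v) ^ 2
      = ∑ v : ZMod n, ((1/4) * (νstar (v - s + 1) - νstar (v - s))^2
        + (1/4) * (νstar (v + s + 1) - νstar (v + s))^2
        + (1/2) * ((νstar (v - s + 1) - νstar (v - s)) * (νstar (v + s + 1) - νstar (v + s)))) := by
    refine Finset.sum_congr rfl fun v _ => ?_
    rw [he, he]
    have h1 : v + 1 - s = v - s + 1 := by ring
    have h2 : v + 1 + s = v + s + 1 := by ring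
    rw [h1, h2]; ring
  have split : ∑ v : ZMod n, ((1/4) * (νstar (v - s + 1) - νstar (v - s))^2
        + (1/4) * (νstar (v + s + 1) - νstar (v + s))^2
        + (1/2) * ((νstar (v - s + 1) - νstar (v - s)) * (νstar (v + s + 1) - νstar (v + s))))
      = (1/4) * (∑ v : ZMod n, (νstar (v - s + 1) - νstar (v - s))^2)
        + (1/4) * (∑ v : ZMod n, (νstar (v + s + 1) - νstar (v + s))^2)
        + (1/2) * (∑ v : ZMod n, (νstar (v - s + 1) - νstar (v - s)) * (νstar (v + s + 1) - νstar (v + s))) := by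
    rw [Finset.sum_add_distrib, Finset.sum_add_distrib, ← Finset.mul_sum, ← Finset.mul_sum,
      ← Finset.mul_sum]
  -- reindexing lemmas
  have s1 : ∑ v : ZMod n, (νstar (v - s + 1) - νstar (v - s))^2
      = ∑ v : ZMod n, (νstar (v + 1) - νstar v)^2 := by
    have := hshift (fun v => (νstar (v + 1) - νstar v)^2) (-s)
    simp only [← sub_eq_add_neg] at this
    exact this.symm
  have s2 : ∑ v : ZMod n, (νstar (v + s + 1) - νstar (v + s))^2
      = ∑ v : ZMod n, (νstar (v + 1) - νstar v)^2 := by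
    exact (hshift (fun v => (νstar (v + 1) - νstar v)^2) s).symm
  have s3 : ∑ v : ZMod n, (νstar (v - s + 1) - νstar (v - s)) * (νstar (v + s + 1) - νstar (v + s))
      = ∑ v : ZMod n, (νstar (v + 1) - νstar v) * (νstar (v + 2*s + 1) - νstar (v + 2*s)) := by
    refine (Fintype.sum_equiv (Equiv.addRight s) _ _ fun v => ?_).symm
    show (νstar (v + 1) - νstar v) * (νstar (v + 2*s + 1) - νstar (v + 2*s))
      = (νstar (v + s - s + 1) - νstar (v + s - s)) * (νstar (v + s + s + 1) - νstar (v + s + s))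
    have h1 : v + s - s + 1 = v + 1 := by ring
    have h2 : v + s - s = v := by ring
    have h3 : v + s + s + 1 = v + 2*s + 1 := by ring
    have h4 : v + s + s = v + 2*s := by ring
    rw [h1, h2, h3, h4]
  -- Step 2: expand the cross term
  have cross : ∑ v : ZMod n, (νstar (v + 1) - νstar v) * (νstar (v + 2*s + 1) - νstar (v + 2*s))
      = ∑ v : ZMod n, νstar v * (2 * νstar (v + 2*s) - νstar (v + 2*s + 1) - νstar (v + 2*s - 1)) := by
    have a1 : ∑ v : ZMod n, νstar v * νstar (v + 2*s)
        = ∑ v : ZMod n, νstar (v + 1) * νstar (v + 2*s + 1) := by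
      have := hshift (fun v => νstar v * νstar (v + 2*s)) 1
      refine this.trans (Finset.sum_congr rfl fun v _ => ?_)
      have h : v + 1 + 2*s = v + 2*s + 1 := by ring
      rw [h]
    have a2 : ∑ v : ZMod n, νstar v * νstar (v + 2*s - 1)
        = ∑ v : ZMod n, νstar (v + 1) * νstar (v + 2*s) := by
      have := hshift (fun v => νstar v * νstar (v + 2*s - 1)) 1
      refine this.trans (Finset.sum_congr rfl fun v _ => ?_)
      have h : v + 1 + 2*s - 1 = v + 2*s := by ring
      rw [h]
    have expand : ∀ v : ZMod n,
        (νstar (v + 1) - νstar v) * (νstar (v + 2*s + 1) - νstar (v + 2*s))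
        = νstar (v + 1) * νstar (v + 2*s + 1) - νstar (v + 1) * νstar (v + 2*s)
          - νstar v * νstar (v + 2*s + 1) + νstar v * νstar (v + 2*s) := fun v => by ring
    have expand2 : ∀ v : ZMod n,
        νstar v * (2 * νstar (v + 2*s) - νstar (v + 2*s + 1) - νstar (v + 2*s - 1))
        = νstar v * νstar (v + 2*s) - νstar v * νstar (v + 2*s - 1)
          - νstar v * νstar (v + 2*s + 1) + νstar v * νstar (v + 2*s) := fun v => by ring
    rw [Finset.sum_congr rfl fun v _ => expand v,
        Finset.sum_congr rfl fun v _ => expand2 v]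
    simp only [Finset.sum_add_distrib, Finset.sum_sub_distrib]
    rw [← a1, ← a2]
  -- final argument normalization: 2*s = 2*t+2 etc.
  have b1 : ∀ v : ZMod n, v + 2*s = v + (2 * (t : ZMod n) + 2) := fun v => by rw [hs]; ring
  have b2 : ∀ v : ZMod n, v + 2*s + 1 = v + (2 * (t : ZMod n) + 3) := fun v => by rw [hs]; ring
  have b3 : ∀ v : ZMod n, v + 2*s - 1 = v + (2 * (t : ZMod n) + 1) := fun v => by rw [hs]; ring
  have final : ∑ v : ZMod n, νstar v * (2 * νstar (v + 2*s) - νstar (v + 2*s + 1) - νstar (v + 2*s - 1))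
      = ∑ v : ZMod n, νstar v * (2 * νstar (v + (2 * (t : ZMod n) + 2)) -
            νstar (v + (2 * (t : ZMod n) + 3)) - νstar (v + (2 * (t : ZMod n) + 1))) := by
    refine Finset.sum_congr rfl fun v _ => ?_
    rw [b2 v, b3 v, b1 v]
  rw [step1, split, s1, s2, s3, cross, final]
  ring
end

section
/- Let δ₀ = 1/d, δ₁ = 1/(d−1) + (d−1), and for s ≥ 2, δ_s = (1/(d−1))(2 + ((d−2)²/(d−1))(1 + h_{s+2}))δ_{s−1} − (1/(d−1)²)δ_{s−2}, where h_s = 1/((d−1)^s − 1). Define for t ≥ 3: c_{d,t} = (1/(d−1))(1 + 1/((d−2)(1+h_t)))δ_{t−2} − (1/(d−1)²)δ_{t−3}. Then for all d ≥ 3 and t ≥ 3, c_{d,t} ≥ 1. -/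
/-- `h_s = 1/((d-1)^s - 1)`. -/
noncomputable def hseq (d : ℝ) (s : ℕ) : ℝ := ((d - 1) ^ s - 1)⁻¹

/-- The sequence `δ_s` from Proposition 3. -/
noncomputable def deltaSeq (d : ℝ) : ℕ → ℝ
  | 0 => 1 / d
  | 1 => 1 / (d - 1) + (d - 1)
  | s + 2 =>
      (1 / (d - 1)) * (2 + (d - 2) ^ 2 / (d - 1) * (1 + hseq d (s + 4))) *
          deltaSeq d (s + 1) -
        (1 / (d - 1) ^ 2) * deltaSeq d s

/-- The quantity `c_{d,t}` from Proposition 3. -/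
noncomputable def cdt (d : ℝ) (t : ℕ) : ℝ :=
  (1 / (d - 1)) * (1 + 1 / ((d - 2) * (1 + hseq d t))) * deltaSeq d (t - 2) -
    (1 / (d - 1) ^ 2) * deltaSeq d (t - 3)

lemma delta_pos_mono (d : ℝ) (hd : 3 ≤ d) :
    ∀ s, 0 < deltaSeq d s ∧ deltaSeq d s ≤ deltaSeq d (s + 1) := by
  have hd1 : (0:ℝ) < d - 1 := by linarith
  have hd1' : d - 1 ≠ 0 := ne_of_gt hd1
  intro s
  induction s with
  | zero =>
      constructor
      · have : (0:ℝ) < d := by linarith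
        simp only [deltaSeq]
        positivity
      · simp only [deltaSeq]
        have h1 : 1 / d ≤ 1 := by
          rw [div_le_one (by linarith)]; linarith
        have h2 : (0:ℝ) < 1 / (d - 1) := by positivity
        linarith
  | succ s ih =>
      obtain ⟨hpos, hmono⟩ := ih
      have hpos1 : 0 < deltaSeq d (s + 1) := lt_of_lt_of_le hpos hmono
      refine ⟨hpos1, ?_⟩
      have hkey : deltaSeq d (s + 2) = deltaSeq d (s + 1) +
          ((1 + (d - 2) ^ 2 * hseq d (s + 4)) * deltaSeq d (s + 1) - deltaSeq d s)
            / (d - 1) ^ 2 := by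
        simp only [deltaSeq]
        field_simp
        ring
      have hh : 0 ≤ hseq d (s + 4) := by
        have h1 : (1:ℝ) ≤ (d - 1) ^ (s + 4) := one_le_pow₀ (by linarith)
        have : (0:ℝ) ≤ (d - 1) ^ (s + 4) - 1 := by linarith
        exact inv_nonneg.mpr this
      have hnum : 0 ≤ (1 + (d - 2) ^ 2 * hseq d (s + 4)) * deltaSeq d (s + 1) - deltaSeq d s := by
        have h0 : 0 ≤ (d - 2) ^ 2 * hseq d (s + 4) * deltaSeq d (s + 1) := by positivity
        nlinarith
      have : 0 ≤ ((1 + (d - 2) ^ 2 * hseq d (s + 4)) * deltaSeq d (s + 1) - deltaSeq d s)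
            / (d - 1) ^ 2 := by positivity
      show deltaSeq d (s + 1) ≤ deltaSeq d (s + 2)
      rw [hkey]; linarith

lemma delta_ge_one' (d : ℝ) (hd : 3 ≤ d) :
    ∀ k, deltaSeq d 1 ≤ deltaSeq d (k + 1) := by
  intro k
  induction k with
  | zero => exact le_refl _
  | succ n ih => exact ih.trans (delta_pos_mono d hd (n + 1)).2

/-- for all `d ≥ 3` and `t ≥ 3`, `c_{d,t} ≥ 1`. -/
theorem stmt16 (d : ℕ) (hd : 3 ≤ d) (t : ℕ) (ht : 3 ≤ t) : 1 ≤ cdt (d : ℝ) t := by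
  set D : ℝ := (d : ℝ) with hD
  have hD3 : (3:ℝ) ≤ D := by rw [hD]; exact_mod_cast hd
  have hq : (2:ℝ) ≤ D - 1 := by linarith
  have hqpos : (0:ℝ) < D - 1 := by linarith
  have hq2 : (1:ℝ) ≤ D - 2 := by linarith
  obtain ⟨k, rfl⟩ : ∃ k, t = 3 + k := ⟨t - 3, by omega⟩
  have e2 : 3 + k - 2 = k + 1 := by omega
  have e3 : 3 + k - 3 = k := by omega
  rw [cdt, e2, e3]
  -- facts about deltaSeq
  have hmono := (delta_pos_mono D hD3 k).2
  have hpos := (delta_pos_mono D hD3 k).1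
  have hpos1 : 0 < deltaSeq D (k + 1) := lt_of_lt_of_le hpos hmono
  have hge : 1 / (D - 1) + (D - 1) ≤ deltaSeq D (k + 1) := by
    have := delta_ge_one' D hD3 k
    simpa [deltaSeq] using this
  -- bounds on hseq
  have hpow3 : (0:ℝ) < (D - 1) ^ 3 - 1 := by
    have h8 : (2:ℝ) ^ 3 ≤ (D - 1) ^ 3 := pow_le_pow_left₀ (by norm_num) hq 3
    norm_num at h8; linarith
  have hpowt : (0:ℝ) < (D - 1) ^ (3 + k) - 1 := by
    have h1 : (D - 1) ^ 3 ≤ (D - 1) ^ (3 + k) :=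
      pow_le_pow_right₀ (by linarith) (by omega)
    linarith
  have hht0 : 0 < hseq D (3 + k) := inv_pos.mpr hpowt
  have hht : hseq D (3 + k) ≤ hseq D 3 := by
    apply inv_anti₀ hpow3
    have : (D - 1) ^ 3 ≤ (D - 1) ^ (3 + k) :=
      pow_le_pow_right₀ (by linarith) (by omega)
    linarith
  -- coefficient bounds
  have hden_pos : 0 < (D - 2) * (1 + hseq D (3 + k)) := by positivity
  have hden3_pos : 0 < (D - 2) * (1 + hseq D 3) := by
    have : 0 < hseq D 3 := inv_pos.mpr hpow3
    positivity
  have hcoef : 1 / ((D - 2) * (1 + hseq D 3)) ≤ 1 / ((D - 2) * (1 + hseq D (3 + k))) := by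
    apply one_div_le_one_div_of_le hden_pos
    have : 1 + hseq D (3 + k) ≤ 1 + hseq D 3 := by linarith
    nlinarith
  -- reduce to bound with hseq D 3 and deltaSeq D (k+1) on both terms
  have step1 : (1 / (D - 1)) * (1 + 1 / ((D - 2) * (1 + hseq D 3))) * deltaSeq D (k + 1)
      - (1 / (D - 1) ^ 2) * deltaSeq D (k + 1)
      ≤ (1 / (D - 1)) * (1 + 1 / ((D - 2) * (1 + hseq D (3 + k)))) * deltaSeq D (k + 1)
      - (1 / (D - 1) ^ 2) * deltaSeq D k := by
    have h1 : (1 / (D - 1)) * (1 + 1 / ((D - 2) * (1 + hseq D 3))) * deltaSeq D (k + 1)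
        ≤ (1 / (D - 1)) * (1 + 1 / ((D - 2) * (1 + hseq D (3 + k)))) * deltaSeq D (k + 1) := by
      apply mul_le_mul_of_nonneg_right _ (le_of_lt hpos1)
      apply mul_le_mul_of_nonneg_left _ (by positivity)
      linarith
    have h2 : (1 / (D - 1) ^ 2) * deltaSeq D k ≤ (1 / (D - 1) ^ 2) * deltaSeq D (k + 1) :=
      mul_le_mul_of_nonneg_left hmono (by positivity)
    linarith
  refine le_trans ?_ step1
  -- now pure algebra with hseq D 3 = ((D-1)^3 - 1)⁻¹
  have hA : (1 / (D - 1)) * (1 + 1 / ((D - 2) * (1 + hseq D 3))) - 1 / (D - 1) ^ 2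
      = ((D - 1) ^ 3 + (D - 1) + 1) / (D - 1) ^ 4 := by
    rw [hseq]
    have h1 : (D - 1) ^ 3 - 1 ≠ 0 := ne_of_gt hpow3
    have h2 : D - 2 ≠ 0 := by linarith
    have h3 : D - 1 ≠ 0 := ne_of_gt hqpos
    field_simp
    ring
  have hApos : 0 < ((D - 1) ^ 3 + (D - 1) + 1) / (D - 1) ^ 4 := by positivity
  have hfinal : 1 ≤ ((D - 1) ^ 3 + (D - 1) + 1) / (D - 1) ^ 4 * (1 / (D - 1) + (D - 1)) := by
    have hid : ((D - 1) ^ 3 + (D - 1) + 1) / (D - 1) ^ 4 * (1 / (D - 1) + (D - 1)) - 1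
        = (2 * (D - 1) ^ 3 + (D - 1) ^ 2 + (D - 1) + 1) / (D - 1) ^ 5 := by
      have h3 : D - 1 ≠ 0 := ne_of_gt hqpos
      field_simp
      ring
    have : 0 < (2 * (D - 1) ^ 3 + (D - 1) ^ 2 + (D - 1) + 1) / (D - 1) ^ 5 := by positivity
    linarith
  have hchain : ((D - 1) ^ 3 + (D - 1) + 1) / (D - 1) ^ 4 * (1 / (D - 1) + (D - 1))
      ≤ ((D - 1) ^ 3 + (D - 1) + 1) / (D - 1) ^ 4 * deltaSeq D (k + 1) :=
    mul_le_mul_of_nonneg_left hge (le_of_lt hApos)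
  have := le_trans hfinal hchain
  nlinarith [this, hA, hpos1]
end
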